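/- Consider agents with damped dynamics ẋ^i = v^i, m_i v̇^i = u^i - k_i v^i with k_i > 0, and control u^i = -∑_{j∈N_i} w_{ij}(v^i - v^j) - ∑_{j≠i} ∇_{x^i} V^{ij}. Then along solutions, the energy J = (1/2)∑_i (V^i + m_i ‖v^i‖²) satisfies dJ/dt = -(1/2) v^T ((L+L^T) ⊗ I_n) v - v^T (H ⊗ I_n) v ≤ -min_i(k_i) ‖v‖², where H = diag(k_1,...,k_N); in particular dJ/dt = 0 implies v = 0. -/

import Mathlib

open Matrix BigOperators Kronecker

lemma quadform_aux {N n : ℕ} (A : Matrix (Fin N) (Fin N) ℝ) (x : Fin N × Fin n → ℝ) :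
    x ⬝ᵥ ((A ⊗ₖ (1 : Matrix (Fin n) (Fin n) ℝ)) *ᵥ x)
    = ∑ i, ∑ j, A i j * ∑ kk, x (i, kk) * x (j, kk) := by
  simp only [dotProduct, mulVec, Fintype.sum_prod_type, Matrix.kroneckerMap_apply,
    Matrix.one_apply, mul_ite, mul_one, mul_zero, ite_mul, zero_mul,
    Finset.sum_ite_eq', Finset.mem_univ, if_true, Finset.mul_sum]
  refine Finset.sum_congr rfl fun i _ => ?_
  rw [Finset.sum_comm]
  refine Finset.sum_congr rfl fun j _ => ?_
  simp [Finset.sum_ite_eq, mul_comm, mul_left_comm]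

theorem stmt_17 (N n : ℕ) (m : Fin N → ℝ) (hm : ∀ i, 0 < m i)
    (k : Fin N → ℝ) (hk : ∀ i, 0 < k i)
    (w : Fin N → Fin N → ℝ) (hw : ∀ i j, 0 ≤ w i j) (hwd : ∀ i, w i i = 0)
    (hbal : ∀ i, ∑ j, w i j = ∑ j, w j i)
    (L : Matrix (Fin N) (Fin N) ℝ)
    (hL : ∀ i j, L i j = if i = j then ∑ kk, w i kk else -(w i j))
    (v : Fin N → ℝ → Fin n → ℝ)
    (Vp : Fin N → Fin N → ℝ → ℝ)
    (f : Fin N → Fin N → ℝ → Fin n → ℝ)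
    (hVsym : ∀ i j t, Vp i j t = Vp j i t)
    (hfa : ∀ i j t kk, f i j t kk = -(f j i t kk))
    (hfd : ∀ i t, f i i t = 0)
    (hVdyn : ∀ i j t, i ≠ j →
      HasDerivAt (Vp i j) (∑ kk, f i j t kk * (v i t kk - v j t kk)) t)
    (hdyn : ∀ i t kk, HasDerivAt (fun s => v i s kk)
      ((1 / m i) * (-(∑ j, w i j * (v i t kk - v j t kk)) - (∑ j, f i j t kk)
        - k i * v i t kk)) t)
    (t : ℝ) :
    ∃ D : ℝ,
      D = -(1 / 2) * ((fun p : Fin N × Fin n => v p.1 t p.2) ⬝ᵥ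
            (((L + Lᵀ) ⊗ₖ (1 : Matrix (Fin n) (Fin n) ℝ)) *ᵥ
              (fun p : Fin N × Fin n => v p.1 t p.2)))
          - ((fun p : Fin N × Fin n => v p.1 t p.2) ⬝ᵥ
            (((Matrix.diagonal k) ⊗ₖ (1 : Matrix (Fin n) (Fin n) ℝ)) *ᵥ
              (fun p : Fin N × Fin n => v p.1 t p.2))) ∧
      HasDerivAt
        (fun s => (1 / 2) * ∑ i, ((∑ j ∈ Finset.univ.erase i, Vp i j s)
          + m i * ∑ kk, (v i s kk) ^ 2)) D t ∧
      (∀ i₀ : Fin N, (∀ i, k i₀ ≤ k i) →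
        D ≤ -(k i₀) * ((fun p : Fin N × Fin n => v p.1 t p.2) ⬝ᵥ
          (fun p : Fin N × Fin n => v p.1 t p.2))) ∧
      (D = 0 → ∀ i kk, v i t kk = 0) := by
  classical
  -- abbreviations
  set x : Fin N × Fin n → ℝ := fun p : Fin N × Fin n => v p.1 t p.2 with hx
  set S : Fin N → Fin N → ℝ := fun i j => ∑ kk, v i t kk * v j t kk with hS
  -- the explicit value of the derivative
  set Q : ℝ := ∑ i, ∑ j, w i j * ∑ kk, v i t kk * (v i t kk - v j t kk) with hQdef
  set K : ℝ := ∑ i, k i * ∑ kk, (v i t kk) ^ 2 with hKdef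
  have hSij : ∀ i j, ∑ kk, x (i, kk) * x (j, kk) = S i j := fun i j => rfl
  -- Q is a nonnegative (sum of squares) quantity
  have hQsq : Q = (1/2) * ∑ i, ∑ j, w i j * ∑ kk, (v i t kk - v j t kk) ^ 2 := by
    have hswap : ∑ i, ∑ j, w i j * ∑ kk, (v j t kk) ^ 2
        = ∑ i, ∑ j, w i j * ∑ kk, (v i t kk) ^ 2 := by
      rw [Finset.sum_comm]
      refine Finset.sum_congr rfl fun i _ => ?_
      rw [← Finset.sum_mul, ← Finset.sum_mul, ← hbal]
    have expand : ∀ i j : Fin N, w i j * ∑ kk, v i t kk * (v i t kk - v j t kk)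
        = (1/2) * (w i j * ∑ kk, (v i t kk - v j t kk) ^ 2)
          + (1/2) * (w i j * ∑ kk, (v i t kk) ^ 2)
          - (1/2) * (w i j * ∑ kk, (v j t kk) ^ 2) := by
      intro i j
      simp only [Finset.mul_sum]
      rw [← Finset.sum_add_distrib, ← Finset.sum_sub_distrib]
      refine Finset.sum_congr rfl fun kk _ => ?_
      ring
    calc Q = ∑ i, ∑ j, ((1/2) * (w i j * ∑ kk, (v i t kk - v j t kk) ^ 2)
          + (1/2) * (w i j * ∑ kk, (v i t kk) ^ 2)
          - (1/2) * (w i j * ∑ kk, (v j t kk) ^ 2)) := by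
          rw [hQdef]
          exact Finset.sum_congr rfl fun i _ => Finset.sum_congr rfl fun j _ => expand i j
      _ = (1/2) * ∑ i, ∑ j, w i j * ∑ kk, (v i t kk - v j t kk) ^ 2
          + (1/2) * ∑ i, ∑ j, w i j * ∑ kk, (v i t kk) ^ 2
          - (1/2) * ∑ i, ∑ j, w i j * ∑ kk, (v j t kk) ^ 2 := by
          simp [Finset.sum_add_distrib, Finset.sum_sub_distrib, Finset.mul_sum]
      _ = (1/2) * ∑ i, ∑ j, w i j * ∑ kk, (v i t kk - v j t kk) ^ 2 := by
          rw [hswap]; ring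
  have hQnonneg : 0 ≤ Q := by
    rw [hQsq]
    have : 0 ≤ ∑ i, ∑ j, w i j * ∑ kk, (v i t kk - v j t kk) ^ 2 := by
      refine Finset.sum_nonneg fun i _ => Finset.sum_nonneg fun j _ => ?_
      exact mul_nonneg (hw i j) (Finset.sum_nonneg fun kk _ => sq_nonneg _)
    linarith
  have hKnonneg : 0 ≤ K := by
    refine Finset.sum_nonneg fun i _ => ?_
    exact mul_nonneg (hk i).le (Finset.sum_nonneg fun kk _ => sq_nonneg _)
  -- the matrix expression equals -Q - K
  have hDE : -(1 / 2) * (x ⬝ᵥ (((L + Lᵀ) ⊗ₖ (1 : Matrix (Fin n) (Fin n) ℝ)) *ᵥ x))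
      - (x ⬝ᵥ (((Matrix.diagonal k) ⊗ₖ (1 : Matrix (Fin n) (Fin n) ℝ)) *ᵥ x))
      = -Q - K := by
    rw [quadform_aux, quadform_aux]
    have hrow : ∀ i, ∑ j, L i j * S i j = ∑ j, w i j * (S i i - S i j) := by
      intro i
      have h1 : ∀ j, L i j * S i j
          = (if i = j then ((∑ kk, w i kk) + w i j) * S i j else 0) - w i j * S i j := by
        intro j
        rw [hL]
        by_cases h : i = j
        · subst h; simp; ring
        · simp [h]
      rw [Finset.sum_congr rfl fun j _ => h1 j, Finset.sum_sub_distrib,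
        Finset.sum_ite_eq, if_pos (Finset.mem_univ i)]
      rw [hwd, add_zero]
      simp only [mul_sub, Finset.sum_sub_distrib, ← Finset.sum_mul]
    have hT : ∑ i, ∑ j, Lᵀ i j * S i j = ∑ i, ∑ j, L i j * S i j := by
      rw [Finset.sum_comm]
      refine Finset.sum_congr rfl fun i _ => Finset.sum_congr rfl fun j _ => ?_
      rw [Matrix.transpose_apply]
      congr 1
      rw [hS]
      exact Finset.sum_congr rfl fun kk _ => mul_comm _ _
    have hdiag : ∑ i, ∑ j, (Matrix.diagonal k) i j * S i j = K := by
      rw [hKdef]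
      refine Finset.sum_congr rfl fun i _ => ?_
      rw [Finset.sum_eq_single i]
      · simp [Matrix.diagonal_apply_eq, hS, sq]
      · intro j _ hj
        rw [Matrix.diagonal_apply_ne' k hj, zero_mul]
      · intro h; exact absurd (Finset.mem_univ i) h
    have hQS : Q = ∑ i, ∑ j, L i j * S i j := by
      rw [hQdef]
      refine Finset.sum_congr rfl fun i _ => ?_
      rw [hrow i]
      refine Finset.sum_congr rfl fun j _ => ?_
      congr 1
      rw [hS]
      simp only [mul_sub, Finset.sum_sub_distrib]
    simp only [hSij]
    simp only [Matrix.add_apply, add_mul, Finset.sum_add_distrib]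
    rw [hT, hdiag, ← hQS]
    ring
  -- derivative with explicit value
  have hJ' : HasDerivAt
      (fun s => (1 / 2) * ∑ i, ((∑ j ∈ Finset.univ.erase i, Vp i j s)
        + m i * ∑ kk, (v i s kk) ^ 2))
      ((1 / 2) * ∑ i, ((∑ j ∈ Finset.univ.erase i, ∑ kk, f i j t kk * (v i t kk - v j t kk))
        + m i * ∑ kk, (2 * v i t kk * ((1 / m i) * (-(∑ j, w i j * (v i t kk - v j t kk))
          - (∑ j, f i j t kk) - k i * v i t kk))))) t := by
    refine HasDerivAt.const_mul _ ?_
    refine HasDerivAt.fun_sum fun i _ => ?_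
    refine HasDerivAt.add ?_ ?_
    · refine HasDerivAt.fun_sum fun j hj => ?_
      exact hVdyn i j t fun h => (Finset.ne_of_mem_erase hj) h.symm
    · refine HasDerivAt.const_mul _ ?_
      refine HasDerivAt.fun_sum fun kk _ => ?_
      simpa using (hdyn i t kk).fun_pow 2
  -- the explicit value equals -Q - K
  have hval : (1 / 2) * ∑ i, ((∑ j ∈ Finset.univ.erase i, ∑ kk, f i j t kk * (v i t kk - v j t kk))
        + m i * ∑ kk, (2 * v i t kk * ((1 / m i) * (-(∑ j, w i j * (v i t kk - v j t kk))
          - (∑ j, f i j t kk) - k i * v i t kk)))) = -Q - K := by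
    have hPhi : ∑ i, ∑ j ∈ Finset.univ.erase i, ∑ kk, f i j t kk * (v i t kk - v j t kk)
        = 2 * ∑ i, ∑ j, ∑ kk, f i j t kk * v i t kk := by
      have h0 : ∀ i : Fin N, ∑ j ∈ Finset.univ.erase i, ∑ kk, f i j t kk * (v i t kk - v j t kk)
          = ∑ j, ∑ kk, f i j t kk * (v i t kk - v j t kk) := by
        intro i
        exact Finset.sum_erase _ (by simp [hfd])
      rw [Finset.sum_congr rfl fun i _ => h0 i]
      have h1 : ∑ i, ∑ j, ∑ kk, f i j t kk * v j t kk
          = -∑ i, ∑ j, ∑ kk, f i j t kk * v i t kk := by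
        rw [Finset.sum_comm, ← Finset.sum_neg_distrib]
        refine Finset.sum_congr rfl fun a _ => ?_
        rw [← Finset.sum_neg_distrib]
        refine Finset.sum_congr rfl fun b _ => ?_
        rw [← Finset.sum_neg_distrib]
        refine Finset.sum_congr rfl fun kk _ => ?_
        rw [hfa b a t kk]; ring
      have h2 : ∀ i j : Fin N, ∑ kk, f i j t kk * (v i t kk - v j t kk)
          = (∑ kk, f i j t kk * v i t kk) - ∑ kk, f i j t kk * v j t kk := by
        intro i j
        rw [← Finset.sum_sub_distrib]
        exact Finset.sum_congr rfl fun kk _ => by ring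
      simp only [h2, Finset.sum_sub_distrib]
      rw [h1]; ring
    have hmB : ∀ i, m i * ∑ kk, (2 * v i t kk * ((1 / m i) * (-(∑ j, w i j * (v i t kk - v j t kk))
          - (∑ j, f i j t kk) - k i * v i t kk)))
        = ∑ kk, 2 * v i t kk * (-(∑ j, w i j * (v i t kk - v j t kk))
          - (∑ j, f i j t kk) - k i * v i t kk) := by
      intro i
      rw [Finset.mul_sum]
      refine Finset.sum_congr rfl fun kk _ => ?_
      have := (hm i).ne'
      field_simp
    have hC : ∀ i, ∑ kk, 2 * v i t kk * (-(∑ j, w i j * (v i t kk - v j t kk))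
          - (∑ j, f i j t kk) - k i * v i t kk)
        = -2 * (∑ j, w i j * ∑ kk, v i t kk * (v i t kk - v j t kk))
          - 2 * (∑ j, ∑ kk, f i j t kk * v i t kk)
          - 2 * (k i * ∑ kk, (v i t kk) ^ 2) := by
      intro i
      have e1 : ∀ kk, 2 * v i t kk * (-(∑ j, w i j * (v i t kk - v j t kk))
            - (∑ j, f i j t kk) - k i * v i t kk)
          = -2 * (∑ j, w i j * (v i t kk * (v i t kk - v j t kk)))
            - 2 * (∑ j, f i j t kk * v i t kk)
            - 2 * (k i * (v i t kk) ^ 2) := by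
        intro kk
        have a1 : ∑ j, w i j * (v i t kk * (v i t kk - v j t kk))
            = v i t kk * ∑ j, w i j * (v i t kk - v j t kk) := by
          rw [Finset.mul_sum]
          exact Finset.sum_congr rfl fun j _ => by ring
        have a2 : ∑ j, f i j t kk * v i t kk = (∑ j, f i j t kk) * v i t kk :=
          (Finset.sum_mul _ _ _).symm
        rw [a1, a2]; ring
      rw [Finset.sum_congr rfl fun kk _ => e1 kk]
      simp only [Finset.sum_sub_distrib, ← Finset.mul_sum]
      have s1 : ∑ kk : Fin n, ∑ j, w i j * (v i t kk * (v i t kk - v j t kk))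
          = ∑ j, w i j * ∑ kk, v i t kk * (v i t kk - v j t kk) := by
        rw [Finset.sum_comm]
        exact Finset.sum_congr rfl fun j _ => (Finset.mul_sum _ _ _).symm
      have s2 : ∑ kk : Fin n, ∑ j, f i j t kk * v i t kk
          = ∑ j, ∑ kk, f i j t kk * v i t kk := Finset.sum_comm
      rw [s1, s2]
    rw [Finset.sum_add_distrib, hPhi, Finset.sum_congr rfl fun i _ => (hmB i).trans (hC i)]
    simp only [Finset.sum_sub_distrib, ← Finset.mul_sum]
    rw [hQdef, hKdef]
    ring
  refine ⟨-Q - K, hDE.symm, ?_, ?_, ?_⟩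
  · rw [hval] at hJ'
    exact hJ'
  · intro i₀ hi₀
    have hxx : x ⬝ᵥ x = ∑ i, ∑ kk, (v i t kk) ^ 2 := by
      simp [dotProduct, Fintype.sum_prod_type, hx, sq]
    rw [hxx]
    have h1 : k i₀ * ∑ i, ∑ kk, (v i t kk) ^ 2 ≤ K := by
      rw [Finset.mul_sum, hKdef]
      exact Finset.sum_le_sum fun i _ =>
        mul_le_mul_of_nonneg_right (hi₀ i) (Finset.sum_nonneg fun _ _ => sq_nonneg _)
    linarith
  · intro hD0 i kk
    have hK0 : K = 0 := by linarith
    have hki : k i * ∑ kk, (v i t kk) ^ 2 = 0 := by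
      have h := (Finset.sum_eq_zero_iff_of_nonneg (fun i (_ : i ∈ Finset.univ) =>
        mul_nonneg (hk i).le (Finset.sum_nonneg fun _ _ => sq_nonneg _))).mp
        (hKdef ▸ hK0)
      exact h i (Finset.mem_univ i)
    have hs : ∑ kk, (v i t kk) ^ 2 = 0 := by
      rcases mul_eq_zero.mp hki with h | h
      · exact absurd h (hk i).ne'
      · exact h
    have h := (Finset.sum_eq_zero_iff_of_nonneg (fun kk (_ : kk ∈ Finset.univ) =>
      sq_nonneg (v i t kk))).mp hs kk (Finset.mem_univ kk)
    exact pow_eq_zero_iff two_ne_zero |>.mp h
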